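/- For every t > 0 and every x in [-1/2, 1/2), the one-dimensional periodic heat kernel satisfies φ_t(x) ≤ 2 φ_t(0) e^{-x²/(4t)}, where φ_t(x) = (4πt)^{-1/2} Σ_{k∈ℤ} exp(-(x+k)²/(4t)). -/

import Mathlib

open Real

lemma hk_summable (t : ℝ) (ht : 0 < t) (x : ℝ) :
    Summable fun k : ℤ => Real.exp (-(x + k) ^ 2 / (4 * t)) := by
  have hπ := Real.pi_pos
  have h := HurwitzKernelBounds.summable_f_int 0 x (show 0 < 1 / (4 * π * t) by positivity)
  refine h.congr fun n => ?_
  simp only [HurwitzKernelBounds.f_int, pow_zero, one_mul]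
  congr 1
  have : (n:ℝ) + x = x + n := by ring
  rw [this]
  field_simp

lemma hk_sum_bound (t : ℝ) (ht : 0 < t) (x : ℝ) (hx0 : 0 ≤ x) (hx1 : x ≤ 1 / 2) :
    ∑' k : ℤ, Real.exp (-(x + k) ^ 2 / (4 * t)) ≤
      2 * (∑' k : ℤ, Real.exp (-((0:ℝ) + k) ^ 2 / (4 * t))) * Real.exp (-x ^ 2 / (4 * t)) := by
  set f : ℤ → ℝ := fun k => Real.exp (-(x + k) ^ 2 / (4 * t)) with hfdef
  set g : ℤ → ℝ := fun k => Real.exp (-((0:ℝ) + k) ^ 2 / (4 * t)) with hgdef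
  have hf : Summable f := hk_summable t ht x
  have hg : Summable g := hk_summable t ht 0
  have h4t : (0:ℝ) < 4 * t := by linarith
  -- ℕ-indexed summabilities
  have hfN : Summable fun n : ℕ => f n := hf.comp_injective (fun a b h => by exact_mod_cast h)
  have hfN' : Summable fun n : ℕ => f (-(n + 1)) :=
    hf.comp_injective (fun a b h => by omega)
  have hgN : Summable fun n : ℕ => g n := hg.comp_injective (fun a b h => by exact_mod_cast h)
  have hgN' : Summable fun n : ℕ => g (-(n + 1)) :=
    hg.comp_injective (fun a b h => by omega)
  have hgNneg : Summable fun n : ℕ => g (-n) := hg.comp_injective (fun a b h => by omega)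
  set E : ℝ := Real.exp (-x ^ 2 / (4 * t)) with hE
  have hEpos : 0 < E := Real.exp_pos _
  -- split the sums
  have hsplitf : ∑' k : ℤ, f k = (∑' n : ℕ, f n) + ∑' n : ℕ, f (-(n + 1)) :=
    tsum_of_nat_of_neg_add_one hfN hfN'
  have hsplitg : ∑' k : ℤ, g k = (∑' n : ℕ, g n) + ∑' n : ℕ, g (-(n + 1)) :=
    tsum_of_nat_of_neg_add_one hgN hgN'
  -- termwise bound on nonnegative indices
  have h1 : (∑' n : ℕ, f n) ≤ ∑' n : ℕ, E * g n := by
    refine Summable.tsum_le_tsum (fun n => ?_) hfN (hgN.mul_left E)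
    simp only [hfdef, hgdef, hE]
    rw [← Real.exp_add, Real.exp_le_exp, ← add_div, div_le_div_iff_of_pos_right h4t]
    have hn : (0:ℝ) ≤ (n:ℝ) := n.cast_nonneg
    push_cast
    nlinarith [mul_nonneg hx0 hn]
  -- termwise bound on negative indices
  have h2 : (∑' n : ℕ, f (-(n + 1))) ≤ ∑' n : ℕ, E * g (-n) := by
    refine Summable.tsum_le_tsum (fun n => ?_) hfN' (hgNneg.mul_left E)
    simp only [hfdef, hgdef, hE]
    rw [← Real.exp_add, Real.exp_le_exp, ← add_div, div_le_div_iff_of_pos_right h4t]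
    have hn : (0:ℝ) ≤ (n:ℝ) := n.cast_nonneg
    push_cast
    nlinarith [mul_nonneg (sub_nonneg.mpr hx1) hn]
  -- rewrite the negative-index g sum
  have hsplitgneg : (∑' n : ℕ, g (-n)) = g 0 + ∑' n : ℕ, g (-(n + 1)) := by
    rw [Summable.tsum_eq_zero_add hgNneg]
    push_cast
    norm_num
  have hg0 : g 0 = 1 := by simp [hgdef]
  have hgone : (1:ℝ) ≤ ∑' k : ℤ, g k := by
    have := Summable.le_tsum hg 0 (fun k _ => (Real.exp_pos _).le)
    rw [hg0] at this; exact this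
  have h2' : (∑' n : ℕ, f (-(n + 1))) ≤ E * (1 + ∑' n : ℕ, g (-(n + 1))) := by
    calc (∑' n : ℕ, f (-(n + 1))) ≤ ∑' n : ℕ, E * g (-n) := h2
      _ = E * ∑' n : ℕ, g (-n) := by rw [tsum_mul_left]
      _ = E * (1 + ∑' n : ℕ, g (-(n + 1))) := by rw [hsplitgneg, hg0]
  have h1' : (∑' n : ℕ, f n) ≤ E * ∑' n : ℕ, g n := by
    calc (∑' n : ℕ, f n) ≤ ∑' n : ℕ, E * g n := h1
      _ = E * ∑' n : ℕ, g n := by rw [tsum_mul_left]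
  rw [hsplitf]
  rw [hsplitg] at hgone ⊢
  nlinarith [hgone, hEpos]

/-- The one-dimensional periodic heat kernel on `𝕋 = ℝ/ℤ`. -/
noncomputable def heatKernel1 (t x : ℝ) : ℝ :=
  (4 * π * t) ^ (-(1 / 2 : ℝ)) * ∑' k : ℤ, Real.exp (-(x + k) ^ 2 / (4 * t))

lemma hk_symm (t x : ℝ) :
    (∑' k : ℤ, Real.exp (-(x + k) ^ 2 / (4 * t))) =
      ∑' k : ℤ, Real.exp (-(-x + k) ^ 2 / (4 * t)) := by
  rw [← (Equiv.neg ℤ).tsum_eq fun k : ℤ => Real.exp (-(-x + k) ^ 2 / (4 * t))]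
  refine tsum_congr fun k => ?_
  simp only [Equiv.neg_apply]
  congr 1
  push_cast
  ring

theorem heatKernel1_upper_bound (t : ℝ) (ht : 0 < t) (x : ℝ)
    (hx : x ∈ Set.Ico (-(1 / 2 : ℝ)) (1 / 2)) :
    heatKernel1 t x ≤ 2 * heatKernel1 t 0 * Real.exp (-x ^ 2 / (4 * t)) := by
  obtain ⟨hx0, hx1⟩ := hx
  have hπ := Real.pi_pos
  have hc : (0:ℝ) ≤ (4 * π * t) ^ (-(1 / 2 : ℝ)) :=
    (Real.rpow_pos_of_pos (by positivity) _).le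
  have key : (∑' k : ℤ, Real.exp (-(x + k) ^ 2 / (4 * t))) ≤
      2 * (∑' k : ℤ, Real.exp (-((0:ℝ) + k) ^ 2 / (4 * t))) * Real.exp (-x ^ 2 / (4 * t)) := by
    rcases le_or_gt 0 x with h | h
    · exact hk_sum_bound t ht x h hx1.le
    · have := hk_sum_bound t ht (-x) (by linarith) (by linarith)
      rw [← hk_symm t x] at this
      rw [show (-x) ^ 2 = x ^ 2 by ring] at this
      exact this
  calc heatKernel1 t x
      = (4 * π * t) ^ (-(1 / 2 : ℝ)) * ∑' k : ℤ, Real.exp (-(x + k) ^ 2 / (4 * t)) := rfl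
    _ ≤ (4 * π * t) ^ (-(1 / 2 : ℝ)) *
        (2 * (∑' k : ℤ, Real.exp (-((0:ℝ) + k) ^ 2 / (4 * t))) * Real.exp (-x ^ 2 / (4 * t))) :=
        mul_le_mul_of_nonneg_left key hc
    _ = 2 * heatKernel1 t 0 * Real.exp (-x ^ 2 / (4 * t)) := by
        rw [heatKernel1]; ring
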